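/- Let (X,d) be a complete metric space with |X| ≥ 3 and let T : X → X satisfy: (i) T(T(x)) ≠ x for all x with Tx ≠ x, and (ii) T is a generalized Kannan type mapping with some λ ∈ [0, 2/3). Then T has a fixed point. -/
import Mathlib


theorem stmt_3 {X : Type*} [MetricSpace X] [CompleteSpace X]
    (h3 : 3 ≤ Cardinal.mk X) (T : X → X)
    (hi : ∀ x : X, T x ≠ x → T (T x) ≠ x)
    (l : ℝ) (hl0 : 0 ≤ l) (hl : l < 2/3)
    (hGK : ∀ x y z : X, x ≠ y → y ≠ z → x ≠ z →
      dist (T x) (T y) + dist (T y) (T z) + dist (T x) (T z) ≤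
        l * (dist x (T x) + dist y (T y) + dist z (T z))) :
    ∃ x : X, T x = x := by
  by_contra hfix
  push_neg at hfix
  have hne : ∀ x : X, T x ≠ x := hfix
  have hX : Nonempty X := by
    refine Cardinal.mk_ne_zero_iff.mp ?_
    intro h
    rw [h] at h3
    exact absurd h3 (by norm_num)
  obtain ⟨x0⟩ := hX
  set f : ℕ → X := fun n => T^[n] x0 with hf
  have hfs : ∀ n, f (n + 1) = T (f n) := fun n => Function.iterate_succ_apply' T n x0
  set a : ℕ → ℝ := fun n => dist (f n) (f (n + 1)) with ha
  set k : ℝ := l / (2 - 2 * l) with hk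
  have h2l : (0:ℝ) < 2 - 2 * l := by linarith
  have hk0 : 0 ≤ k := div_nonneg hl0 h2l.le
  have hk1 : k < 1 := by rw [hk, div_lt_one h2l]; linarith
  have key : ∀ n, a (n + 1) ≤ k * a n := by
    intro n
    have hne1 : f n ≠ T (f n) := (hne (f n)).symm
    have hne2 : T (f n) ≠ T (T (f n)) := (hne (T (f n))).symm
    have hne3 : f n ≠ T (T (f n)) := (hi (f n) (hne (f n))).symm
    have h1 := hGK (f n) (T (f n)) (T (T (f n))) hne1 hne2 hne3
    have t1 := dist_triangle (T (f n)) (T (T (T (f n)))) (T (T (f n)))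
    have t2 := dist_triangle (T (T (f n))) (T (f n)) (T (T (T (f n))))
    have c1 := dist_comm (T (T (T (f n)))) (T (T (f n)))
    have c2 := dist_comm (T (T (f n))) (T (f n))
    set A := dist (f n) (T (f n))
    set B := dist (T (f n)) (T (T (f n)))
    set C := dist (T (T (f n))) (T (T (T (f n))))
    have i1 : 2 * B ≤ l * (A + B + C) := by linarith
    have i2 : 2 * C ≤ l * (A + B + C) := by linarith
    have j1 : 0 ≤ (2 - l) * (l * (A + B + C) - 2 * B) :=
      mul_nonneg (by linarith) (by linarith)
    have j2 : 0 ≤ l * (l * (A + B + C) - 2 * C) :=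
      mul_nonneg hl0 (by linarith)
    have hB : (2 - 2 * l) * B ≤ l * A := by nlinarith [j1, j2]
    have e1 : f (n + 1) = T (f n) := hfs n
    have e2 : f (n + 2) = T (T (f n)) := by
      rw [show n + 2 = n + 1 + 1 from rfl, hfs, e1]
    show dist (f (n + 1)) (f (n + 2)) ≤ k * dist (f n) (f (n + 1))
    rw [e1, e2, hk, div_mul_eq_mul_div, le_div_iff₀ h2l]
    nlinarith [hB]
  have hgeo : ∀ n, a n ≤ a 0 * k ^ n := by
    intro n
    induction n with
    | zero => simp
    | succ m ih =>
      calc a (m + 1) ≤ k * a m := key m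
        _ ≤ k * (a 0 * k ^ m) := by
            exact mul_le_mul_of_nonneg_left ih hk0
        _ = a 0 * k ^ (m + 1) := by ring
  have hcauchy : CauchySeq f := cauchySeq_of_le_geometric k (a 0) hk1 hgeo
  obtain ⟨xs, hlim⟩ := cauchySeq_tendsto_of_complete hcauchy
  set c : ℝ := dist xs (T xs) with hc
  have hcpos : 0 < c := dist_pos.mpr (hne xs).symm
  have ha0 : Filter.Tendsto a Filter.atTop (nhds 0) := by
    apply squeeze_zero (fun n => dist_nonneg) hgeo
    have := (tendsto_pow_atTop_nhds_zero_of_lt_one hk0 hk1).const_mul (a 0)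
    simpa using this
  obtain ⟨N, hN⟩ := Filter.eventually_atTop.mp (Filter.Tendsto.eventually_lt_const hcpos ha0)
  have hnex : ∀ n ≥ N, f n ≠ xs := by
    intro n hn h
    have : a n = c := by
      show dist (f n) (f (n + 1)) = c
      rw [hfs n, h, hc]
    exact absurd (hN n hn) (by rw [this]; exact lt_irrefl c)
  have hmain : ∀ n ≥ N, dist (f (n + 2)) (T xs) ≤ l * (a n + a (n + 1) + c) := by
    intro n hn
    have h1 := hGK (f n) (f (n + 1)) xs
      (by rw [hfs n]; exact (hne (f n)).symm)
      (hnex (n + 1) (by omega)) (hnex n hn)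
    have e1 : T (f n) = f (n + 1) := (hfs n).symm
    have e2 : T (f (n + 1)) = f (n + 2) := (hfs (n + 1)).symm
    rw [e1, e2] at h1
    have d1 : 0 ≤ dist (f (n + 1)) (f (n + 2)) := dist_nonneg
    have d2 : 0 ≤ dist (f (n + 1)) (T xs) := dist_nonneg
    show dist (f (n + 2)) (T xs) ≤ l * (dist (f n) (f (n + 1)) + dist (f (n + 1)) (f (n + 2)) + dist xs (T xs))
    linarith
  have hglim : Filter.Tendsto (fun n => dist (f (n + 2)) (T xs)) Filter.atTop (nhds c) := by
    have hlim2 : Filter.Tendsto (fun n => f (n + 2)) Filter.atTop (nhds xs) :=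
      hlim.comp (Filter.tendsto_add_atTop_nat 2)
    exact hlim2.dist tendsto_const_nhds
  have hhlim : Filter.Tendsto (fun n => l * (a n + a (n + 1) + c)) Filter.atTop (nhds (l * c)) := by
    have ha1 : Filter.Tendsto (fun n => a (n + 1)) Filter.atTop (nhds 0) :=
      ha0.comp (Filter.tendsto_add_atTop_nat 1)
    have := ((ha0.add ha1).add tendsto_const_nhds (b := c)).const_mul l
    simpa using this
  have hle : c ≤ l * c := by
    refine le_of_tendsto_of_tendsto hglim hhlim ?_
    filter_upwards [Filter.eventually_ge_atTop N] with n hn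
    exact hmain n hn
  nlinarith [mul_pos (show (0:ℝ) < 1 - l by linarith) hcpos]
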